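/- Suppose F is a weighted constraint language over a finite domain D all of whose weight functions take values in [0,1]∩ℚ, and let Φ = ν(F). If F is weakly log-supermodular, then Φ is weakly submodular. -/

import Mathlib

open scoped NNRat ENNReal

/-- A cost function of some arity over domain `D`, taking values in `ℝ≥0 ∪ {∞}`. -/
abbrev CFun (D : Type) : Type := Σ k : ℕ, (Fin k → D) → ℝ≥0∞

/-- The binary crisp equality cost function. -/
noncomputable def eqC (D : Type) [DecidableEq D] : (Fin 2 → D) → ℝ≥0∞ :=
  fun x => if x 0 = x 1 then 0 else ⊤

/-- `f` is definable by a psm-formula over `Φ ∪ {eq}`: a minimisation over `k`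
bound variables of a sum of `m` atomic formulas. -/
def InVClone {D : Type} [Fintype D] [DecidableEq D] (Φ : Set (CFun D)) {n : ℕ}
    (f : (Fin n → D) → ℝ≥0∞) : Prop :=
  ∃ (k m : ℕ) (ar : Fin m → ℕ) (g : ∀ j : Fin m, (Fin (ar j) → D) → ℝ≥0∞)
    (sc : ∀ j : Fin m, Fin (ar j) → Fin (n + k)),
    (∀ j : Fin m, (⟨ar j, g j⟩ : CFun D) ∈ Φ ∨ (⟨ar j, g j⟩ : CFun D) = ⟨2, eqC D⟩) ∧
    ∀ x : Fin n → D, f x = ⨅ y : Fin k → D, ∑ j : Fin m, g j (fun i => Fin.append x y (sc j i))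

/-- Weak submodularity of a valued constraint language. -/
def WeaklySubmodular {D : Type} [Fintype D] [DecidableEq D] (Φ : Set (CFun D)) : Prop :=
  ∀ f : (Fin 2 → D) → ℝ≥0∞, InVClone Φ f → ∀ a b : D,
    f ![a, a] + f ![b, b] ≤ f ![a, b] + f ![b, a] ∨ (f ![a, a] = ⊤ ∧ f ![b, b] = ⊤)

/-- A weight function of some arity over domain `D`, taking values in `ℚ≥0`. -/
abbrev WFun (D : Type) : Type := Σ k : ℕ, (Fin k → D) → ℚ≥0

/-- The binary equality weight function. -/
def EQw (D : Type) [DecidableEq D] : (Fin 2 → D) → ℚ≥0 :=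
  fun x => if x 0 = x 1 then 1 else 0

/-- `F` is definable by a pps-formula over `𝓕 ∪ {EQ}`: a sum over `k` bound
variables of a product of `m` atomic formulas. -/
def InFClone {D : Type} [Fintype D] [DecidableEq D] (𝓕 : Set (WFun D)) {n : ℕ}
    (F : (Fin n → D) → ℚ≥0) : Prop :=
  ∃ (k m : ℕ) (ar : Fin m → ℕ) (G : ∀ j : Fin m, (Fin (ar j) → D) → ℚ≥0)
    (sc : ∀ j : Fin m, Fin (ar j) → Fin (n + k)),
    (∀ j : Fin m, (⟨ar j, G j⟩ : WFun D) ∈ 𝓕 ∨ (⟨ar j, G j⟩ : WFun D) = ⟨2, EQw D⟩) ∧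
    ∀ x : Fin n → D, F x = ∑ y : Fin k → D, ∏ j : Fin m, G j (fun i => Fin.append x y (sc j i))

/-- Weak log-supermodularity of a weighted constraint language. -/
def WeaklyLogSupermodular {D : Type} [Fintype D] [DecidableEq D] (𝓕 : Set (WFun D)) : Prop :=
  ∀ F : (Fin 2 → D) → ℚ≥0, InFClone 𝓕 F → ∀ a b : D,
    F ![a, b] * F ![b, a] ≤ F ![a, a] * F ![b, b] ∨ (F ![a, a] = 0 ∧ F ![b, b] = 0)

/-- The cost function `ν(F)` associated with a `[0,1]`-valued weight function `F`:
`ν(F)(x) = -ln F(x)` if `F(x) > 0`, and `∞` if `F(x) = 0`. -/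
noncomputable def nuF {D : Type} {k : ℕ} (F : (Fin k → D) → ℚ≥0) : (Fin k → D) → ℝ≥0∞ :=
  fun x => if F x = 0 then ⊤ else ENNReal.ofReal (-Real.log ((F x : ℚ) : ℝ))

/-- The valued constraint language `ν(𝓕)`. -/
def nuSet {D : Type} (𝓕 : Set (WFun D)) : Set (CFun D) :=
  {g | ∃ F ∈ 𝓕, g = ⟨F.1, nuF F.2⟩}

noncomputable def nuQ (r : ℚ≥0) : ℝ≥0∞ :=
  if r = 0 then ⊤ else ENNReal.ofReal (-Real.log ((r : ℚ) : ℝ))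

lemma nuQ_antitone : Antitone nuQ := by
  intro r s h
  unfold nuQ
  rcases eq_or_ne r 0 with rfl | hr0
  · simp
  have hs0 : s ≠ 0 := fun hs => hr0 (le_antisymm (hs ▸ h) (zero_le))
  rw [if_neg hr0, if_neg hs0]
  apply ENNReal.ofReal_le_ofReal
  have h1 : ((r:ℚ):ℝ) ≤ ((s:ℚ):ℝ) := by exact_mod_cast h
  have hr' : (0:ℝ) < ((r:ℚ):ℝ) := by exact_mod_cast zero_lt_iff.mpr hr0
  have := Real.log_le_log hr' h1
  linarith

lemma nuQ_one : nuQ 1 = 0 := by simp [nuQ]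

lemma nuQ_mul {r s : ℚ≥0} (hr : r ≤ 1) (hs : s ≤ 1) : nuQ (r * s) = nuQ r + nuQ s := by
  rcases eq_or_ne r 0 with rfl | hr0
  · simp [nuQ]
  rcases eq_or_ne s 0 with rfl | hs0
  · simp [nuQ]
  have hrs : r * s ≠ 0 := mul_ne_zero hr0 hs0
  simp only [nuQ, if_neg hr0, if_neg hs0, if_neg hrs]
  have hrp : (0:ℝ) < ((r:ℚ):ℝ) := by exact_mod_cast zero_lt_iff.mpr hr0
  have hsp : (0:ℝ) < ((s:ℚ):ℝ) := by exact_mod_cast zero_lt_iff.mpr hs0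
  have hr1 : ((r:ℚ):ℝ) ≤ 1 := by exact_mod_cast hr
  have hs1 : ((s:ℚ):ℝ) ≤ 1 := by exact_mod_cast hs
  rw [show ((↑(r*s):ℚ):ℝ) = ((r:ℚ):ℝ) * ((s:ℚ):ℝ) by push_cast; ring]
  rw [Real.log_mul hrp.ne' hsp.ne', neg_add,
    ENNReal.ofReal_add (by linarith [Real.log_nonpos hrp.le hr1])
      (by linarith [Real.log_nonpos hsp.le hs1])]

lemma nuQ_prod {ι : Type*} (s : Finset ι) (G : ι → ℚ≥0) (h : ∀ i ∈ s, G i ≤ 1) :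
    nuQ (∏ i ∈ s, G i) = ∑ i ∈ s, nuQ (G i) := by
  induction s using Finset.cons_induction with
  | empty => simpa using nuQ_one
  | cons a s ha ih =>
    rw [Finset.prod_cons, Finset.sum_cons,
      nuQ_mul (h a (Finset.mem_cons_self a s))
        (Finset.prod_le_one (fun i _ => zero_le) (fun i hi => h i (Finset.mem_cons_of_mem hi))),
      ih (fun i hi => h i (Finset.mem_cons_of_mem hi))]

lemma nuQ_iInf {ι : Type} [Fintype ι] (hne : (Finset.univ : Finset ι).Nonempty)
    (P : ι → ℚ≥0) : ⨅ y, nuQ (P y) = nuQ (Finset.univ.sup' hne P) := by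
  apply le_antisymm
  · obtain ⟨y0, -, hy0⟩ := Finset.exists_mem_eq_sup' hne P
    rw [hy0]; exact iInf_le _ y0
  · exact le_iInf fun y => nuQ_antitone (Finset.le_sup' P (Finset.mem_univ y))

lemma aux_le_of_forall_pow_le {u v C : ℚ≥0} (h : ∀ p : ℕ, u ^ (p+1) ≤ C * v ^ (p+1)) :
    u ≤ v := by
  by_contra hvu
  push_neg at hvu
  rcases eq_or_ne v 0 with rfl | hv
  · have h0 := h 0
    simp at h0
    simp [h0] at hvu
  · have hv' : 0 < v := zero_lt_iff.mpr hv
    have hr : 1 < u / v := by rwa [lt_div_iff₀ hv', one_mul]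
    obtain ⟨n, hn⟩ := pow_unbounded_of_one_lt C hr
    have hle : (u / v) ^ (n+1) ≤ C := by
      rw [div_pow, div_le_iff₀ (pow_pos hv' _)]
      exact h n
    have hmono : (u/v)^n ≤ (u/v)^(n+1) := pow_le_pow_right₀ hr.le (Nat.le_succ n)
    exact absurd (hn.trans_le (hmono.trans hle)) (lt_irrefl _)

/-- If all weight functions of `𝓕` take values in `[0,1] ∩ ℚ`
and `𝓕` is weakly log-supermodular, then `ν(𝓕)` is weakly submodular. -/
theorem weaklySubmodular_of_weaklyLogSupermodular
    {D : Type} [Fintype D] [DecidableEq D] (hD : 2 ≤ Fintype.card D)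
    (𝓕 : Set (WFun D)) (hval : ∀ F ∈ 𝓕, ∀ x, F.2 x ≤ 1)
    (hwlsm : WeaklyLogSupermodular 𝓕) :
    WeaklySubmodular (nuSet 𝓕) := by
  intro f hf a b
  obtain ⟨k, m, ar, g, sc, hg, hfx⟩ := hf
  have key : ∀ (n : ℕ) (gg : (Fin n → D) → ℝ≥0∞),
      ((⟨n, gg⟩ : CFun D) ∈ nuSet 𝓕 ∨ (⟨n, gg⟩ : CFun D) = ⟨2, eqC D⟩) →
      ∃ G : (Fin n → D) → ℚ≥0, gg = nuF G ∧
        ((⟨n, G⟩ : WFun D) ∈ 𝓕 ∨ (⟨n, G⟩ : WFun D) = ⟨2, EQw D⟩) ∧ ∀ x, G x ≤ 1 := by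
    rintro n gg (⟨⟨kF, Fv⟩, hF, hFe⟩ | h)
    · obtain ⟨h1, h2⟩ := Sigma.mk.inj_iff.mp hFe
      subst h1
      exact ⟨Fv, eq_of_heq h2, Or.inl hF, fun x => hval _ hF x⟩
    · obtain ⟨h1, h2⟩ := Sigma.mk.inj_iff.mp h
      subst h1
      refine ⟨EQw D, ?_, Or.inr rfl, ?_⟩
      · rw [eq_of_heq h2]
        funext x
        by_cases hx : x 0 = x 1 <;> simp [eqC, EQw, nuF, hx]
      · intro x
        simp only [EQw]
        split_ifs <;> norm_num
  choose G hgG hGmem hGle using fun j => key (ar j) (g j) (hg j)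
  haveI : Nonempty D := Fintype.card_pos_iff.mp (by omega)
  set P : (Fin 2 → D) → (Fin k → D) → ℚ≥0 :=
    fun x y => ∏ j, G j (fun i => Fin.append x y (sc j i)) with hP
  have hPle : ∀ x y, P x y ≤ 1 := fun x y =>
    Finset.prod_le_one (fun _ _ => zero_le) (fun j _ => hGle j _)
  have hfP : ∀ x, f x = ⨅ y, nuQ (P x y) := by
    intro x
    rw [hfx x]
    refine iInf_congr fun y => ?_
    rw [hP]
    rw [nuQ_prod Finset.univ _ (fun j _ => hGle j _)]
    exact Finset.sum_congr rfl fun j _ => by rw [hgG j]; rfl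
  have hne : (Finset.univ : Finset (Fin k → D)).Nonempty := Finset.univ_nonempty
  set M : (Fin 2 → D) → ℚ≥0 := fun x => Finset.univ.sup' hne (P x) with hM
  have hfM : ∀ x, f x = nuQ (M x) := fun x => by rw [hfP x, hM]; exact nuQ_iInf hne (P x)
  have hMle : ∀ x, M x ≤ 1 := fun x => Finset.sup'_le _ _ fun y _ => hPle x y
  set C : ℚ≥0 := (Fintype.card (Fin k → D) : ℚ≥0) with hC
  have hclone : ∀ p : ℕ, InFClone 𝓕 (fun x : Fin 2 → D => ∑ y : Fin k → D, (P x y) ^ (p+1)) := by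
    intro p
    refine ⟨k, m * (p+1), fun i => ar (finProdFinEquiv.symm i).1,
      fun i => G (finProdFinEquiv.symm i).1, fun i => sc (finProdFinEquiv.symm i).1,
      fun i => hGmem _, fun x => ?_⟩
    refine Finset.sum_congr rfl fun y _ => ?_
    rw [Equiv.prod_comp finProdFinEquiv.symm
      (fun q : Fin m × Fin (p+1) => G q.1 (fun i => Fin.append x y (sc q.1 i)))]
    rw [Fintype.prod_prod_type]
    simp [hP, Finset.prod_pow]
  have hlow : ∀ x p, (M x)^(p+1) ≤ ∑ y, (P x y)^(p+1) := by
    intro x p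
    obtain ⟨y0, -, hy0⟩ := Finset.exists_mem_eq_sup' hne (P x)
    rw [hM]
    simp only
    rw [hy0]
    exact Finset.single_le_sum (f := fun y => (P x y)^(p+1)) (fun y _ => zero_le)
      (Finset.mem_univ y0)
  have hhigh : ∀ x p, ∑ y, (P x y)^(p+1) ≤ C * (M x)^(p+1) := by
    intro x p
    have h1 := Finset.sum_le_card_nsmul Finset.univ (fun y => (P x y)^(p+1)) ((M x)^(p+1))
      (fun y _ => pow_le_pow_left₀ (zero_le) (Finset.le_sup' (P x) (Finset.mem_univ y)) _)
    rwa [Finset.card_univ, nsmul_eq_mul] at h1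
  have main : M ![a,b] * M ![b,a] ≤ M ![a,a] * M ![b,b] ∨ (M ![a,a] = 0 ∧ M ![b,b] = 0) := by
    by_cases h0 : M ![a,a] = 0 ∧ M ![b,b] = 0
    · exact Or.inr h0
    left
    apply aux_le_of_forall_pow_le (C := C * C)
    intro p
    rcases hwlsm _ (hclone p) a b with hle | ⟨hz1, hz2⟩
    · calc (M ![a,b] * M ![b,a])^(p+1)
          = (M ![a,b])^(p+1) * (M ![b,a])^(p+1) := mul_pow _ _ _
        _ ≤ (∑ y, (P ![a,b] y)^(p+1)) * (∑ y, (P ![b,a] y)^(p+1)) :=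
            mul_le_mul' (hlow _ p) (hlow _ p)
        _ ≤ (∑ y, (P ![a,a] y)^(p+1)) * (∑ y, (P ![b,b] y)^(p+1)) := hle
        _ ≤ (C * (M ![a,a])^(p+1)) * (C * (M ![b,b])^(p+1)) :=
            mul_le_mul' (hhigh _ p) (hhigh _ p)
        _ = (C * C) * (M ![a,a] * M ![b,b])^(p+1) := by ring
    · exfalso
      apply h0
      constructor
      · have h1 := hlow ![a,a] p
        rw [hz1] at h1
        exact pow_eq_zero_iff (Nat.succ_ne_zero p) |>.mp (le_antisymm h1 (zero_le))
      · have h2 := hlow ![b,b] p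
        rw [hz2] at h2
        exact pow_eq_zero_iff (Nat.succ_ne_zero p) |>.mp (le_antisymm h2 (zero_le))
  rcases main with hle | ⟨h1, h2⟩
  · left
    rw [hfM, hfM, hfM, hfM, ← nuQ_mul (hMle _) (hMle _), ← nuQ_mul (hMle _) (hMle _)]
    exact nuQ_antitone hle
  · right
    rw [hfM, hfM, h1, h2]
    constructor <;> simp [nuQ]
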